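/- For n = 2 and α = [[a,b],[0,c]] with a > 0 and c > 0, the Shintani cocycle value σ(1,α) is identically zero on R^2 \ {0}. -/

import Mathlib

open Matrix
open scoped BigOperators

noncomputable section

/-- The iterated Laurent series field `ℝ((ε_1))...((ε_n))`, together with its field
structure (built by recursion). -/
def IterData : ℕ → Σ' (T : Type), Field T
  | 0 => ⟨ℝ, inferInstance⟩
  | (n + 1) =>
    let p := IterData n
    letI : Field p.1 := p.2
    ⟨LaurentSeries p.1, inferInstance⟩

/-- The iterated Laurent series field `F = ℝ((ε_1))...((ε_n))`. -/
def IterLaurent (n : ℕ) : Type := (IterData n).1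

instance (n : ℕ) : Field (IterLaurent n) := (IterData n).2

/-- `IterLaurent 0` is definitionally `ℝ`. -/
def toR (x : IterLaurent 0) : ℝ := x

/-- `IterLaurent (n+1)` is definitionally the Laurent series field over `IterLaurent n`. -/
def toLS {n : ℕ} (x : IterLaurent (n + 1)) : LaurentSeries (IterLaurent n) := x

/-- An element of `ℝ((ε_1))...((ε_n))` is *positive* if it is nonzero and the leading
coefficient (the coefficient of the smallest exponent, exponents being ordered
lexicographically with `ε_{i+1}` infinitesimal with respect to `ε_i`) is positive. -/
def IterPos : ∀ n : ℕ, IterLaurent n → Prop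
  | 0, x => 0 < toR x
  | (n + 1), x => toLS x ≠ 0 ∧ IterPos n ((toLS x).coeff (toLS x).order)

/-- The order relation on `ℝ((ε_1))...((ε_n))`: `x < y` iff `y - x` is positive. -/
def llt (n : ℕ) (x y : IterLaurent n) : Prop := IterPos n (y - x)

/-- The embedding of `ℝ` into `ℝ((ε_1))...((ε_n))` as constant series. -/
def realEmb : ∀ n : ℕ, ℝ → IterLaurent n
  | 0, r => r
  | (n + 1), r => (HahnSeries.C (realEmb n r) : LaurentSeries (IterLaurent n))

/-- The variable `ε_{i+1}` as an element of `ℝ((ε_1))...((ε_n))` (for `i : Fin n`). -/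
def epsV : ∀ n : ℕ, Fin n → IterLaurent n
  | (n + 1), i =>
    if h : (i : ℕ) < n then
      (HahnSeries.C (epsV n ⟨i, h⟩) : LaurentSeries (IterLaurent n))
    else (HahnSeries.single (1 : ℤ) 1 : LaurentSeries (IterLaurent n))

open Classical in
/-- The sign of an element of `ℝ((ε_1))...((ε_n))` with respect to the
leading-coefficient positivity. -/
def sgnIter (n : ℕ) (x : IterLaurent n) : ℤ :=
  if IterPos n x then 1 else if IterPos n (-x) then -1 else 0

open Classical in
/-- The signed open-cone characteristic function over `ℝ((ε_1))...((ε_m))`: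
`c(v_1,...,v_n)(w) = sgn det(v_1,...,v_n)` if all the dual-basis coordinates of `w`
with respect to the basis `v_1, ..., v_n` are positive, and `0` otherwise. -/
def cIter (m n : ℕ) (v : Fin n → (Fin n → IterLaurent m)) (w : Fin n → IterLaurent m) : ℤ :=
  let M : Matrix (Fin n) (Fin n) (IterLaurent m) := Matrix.of fun r j => v j r
  if ∀ i, IterPos m ((M⁻¹ *ᵥ w) i) then sgnIter m M.det else 0

/-- The Shintani cocycle `σ(α_1,...,α_n)(w) = c(α_1 b(ε_1), ..., α_n b(ε_n))(w)`,
where `b(ε) = (1, ε, ..., ε^{n-1})ᵀ` and `w ∈ ℝ^n` is embedded into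
`F^n = (ℝ((ε_1))...((ε_n)))^n` as a constant vector. -/
def sigmaC (n : ℕ) (α : Fin n → Matrix (Fin n) (Fin n) ℝ) (w : Fin n → ℝ) : ℤ :=
  cIter n n
    (fun (i : Fin n) (r : Fin n) => ∑ j : Fin n, realEmb n (α i r j) * (epsV n i) ^ (j : ℕ))
    (fun r : Fin n => realEmb n (w r))

namespace SAux
open HahnSeries

def ofLS {n : ℕ} (x : LaurentSeries (IterLaurent n)) : IterLaurent (n + 1) := x

lemma iterPos_iff {n : ℕ} (x : LaurentSeries (IterLaurent n)) :
    IterPos (n+1) (ofLS x) ↔ x ≠ 0 ∧ IterPos n x.leadingCoeff := by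
  rw [HahnSeries.leadingCoeff_eq]; exact Iff.rfl

lemma iterPos_ne_zero : ∀ {n : ℕ} {x : IterLaurent n}, IterPos n x → x ≠ 0
  | 0, x, hx => fun h => absurd (h ▸ hx) (lt_irrefl _)
  | n+1, x, hx => fun h => hx.1 (congrArg toLS h)

lemma iterPos_mul : ∀ {n : ℕ} {x y : IterLaurent n},
    IterPos n x → IterPos n y → IterPos n (x * y)
  | 0, x, y, hx, hy => mul_pos hx hy
  | n+1, x, y, hx, hy => by
    have hx0 : toLS x ≠ 0 := hx.1
    have hy0 : toLS y ≠ 0 := hy.1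
    have h0 : toLS x * toLS y ≠ 0 := mul_ne_zero hx0 hy0
    refine ⟨h0, ?_⟩
    show IterPos n ((toLS x * toLS y).coeff (toLS x * toLS y).order)
    rw [HahnSeries.order_mul hx0 hy0, HahnSeries.coeff_mul_order_add_order,
      HahnSeries.leadingCoeff_eq, HahnSeries.leadingCoeff_eq]
    exact iterPos_mul hx.2 hy.2

lemma iterPos_not_neg : ∀ {n : ℕ} {x : IterLaurent n},
    IterPos n x → IterPos n (-x) → False
  | 0, x, hx, hnx => by
    have h1 : (0:ℝ) < toR x := hx
    have h2 : (0:ℝ) < -(toR x) := hnx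
    linarith
  | n+1, x, hx, hnx => by
    have h2 : IterPos n ((-(toLS x)).coeff ((-(toLS x)).order)) := hnx.2
    rw [HahnSeries.order_neg, HahnSeries.coeff_neg] at h2
    exact iterPos_not_neg hx.2 h2

lemma posC {n : ℕ} {s : IterLaurent n} (hs : IterPos n s) :
    IterPos (n+1) (ofLS (HahnSeries.C s)) := by
  have hs0 : s ≠ 0 := iterPos_ne_zero hs
  rw [iterPos_iff]
  refine ⟨by simpa using hs0, ?_⟩
  rw [HahnSeries.C_apply, HahnSeries.leadingCoeff_of_single]
  exact hs

lemma posX {n : ℕ} {t : IterLaurent n} (ht : IterPos n t) :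
    IterPos (n+1) (ofLS (HahnSeries.C t * HahnSeries.single (1:ℤ) 1)) := by
  have ht0 : t ≠ 0 := iterPos_ne_zero ht
  rw [iterPos_iff]
  rw [HahnSeries.C_apply, HahnSeries.single_mul_single, zero_add, mul_one]
  exact ⟨by simpa [HahnSeries.single_eq_zero_iff] using ht0,
    by rw [HahnSeries.leadingCoeff_of_single]; exact ht⟩

lemma posA {n : ℕ} {s t : IterLaurent n} (hs : IterPos n s) :
    IterPos (n+1) (ofLS (HahnSeries.C s + HahnSeries.C t * HahnSeries.single (1:ℤ) 1)) := by
  have hs0 : s ≠ 0 := iterPos_ne_zero hs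
  rw [HahnSeries.C_apply, HahnSeries.C_apply, HahnSeries.single_mul_single, zero_add, mul_one,
    iterPos_iff]
  have hlt : (HahnSeries.single (0:ℤ) s).orderTop < (HahnSeries.single (1:ℤ) t).orderTop := by
    rw [HahnSeries.orderTop_single hs0]
    rcases eq_or_ne t 0 with h | h
    · simp [h]
    · rw [HahnSeries.orderTop_single h]
      exact_mod_cast zero_lt_one
  have hlc := HahnSeries.leadingCoeff_add_eq_left hlt
  rw [HahnSeries.leadingCoeff_of_single] at hlc
  refine ⟨fun h => hs0 ?_, by rw [hlc]; exact hs⟩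
  rw [h, HahnSeries.leadingCoeff_zero] at hlc
  exact hlc.symm


lemma ofLS_mul {n : ℕ} (x y : LaurentSeries (IterLaurent n)) :
    ofLS x * ofLS y = ofLS (x * y) := rfl

/-- `C` as a ring hom `IterLaurent n →+* IterLaurent (n+1)`. -/
def CC {n : ℕ} : IterLaurent n →+* IterLaurent (n + 1) := HahnSeries.C

/-- The Laurent variable of the outermost level. -/
def XV {n : ℕ} : IterLaurent (n + 1) := ofLS (HahnSeries.single (1:ℤ) 1)

lemma CC_mul {n : ℕ} (s t : IterLaurent n) : CC (s * t) = CC s * CC t := map_mul _ s t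
lemma CC_add {n : ℕ} (s t : IterLaurent n) : CC (s + t) = CC s + CC t := map_add _ s t
lemma CC_sub {n : ℕ} (s t : IterLaurent n) : CC (s - t) = CC s - CC t := map_sub _ s t
lemma CC_neg {n : ℕ} (s : IterLaurent n) : CC (-s) = -CC s := map_neg _ s
lemma CC_zero {n : ℕ} : CC (0 : IterLaurent n) = 0 := map_zero _

lemma posC' {n : ℕ} {s : IterLaurent n} (hs : IterPos n s) :
    IterPos (n + 1) (CC s) := posC hs
lemma posX' {n : ℕ} {t : IterLaurent n} (ht : IterPos n t) :
    IterPos (n + 1) (CC t * XV) := posX ht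
lemma posA' {n : ℕ} {s t : IterLaurent n} (hs : IterPos n s) :
    IterPos (n + 1) (CC s + CC t * XV) := posA hs

end SAux

set_option maxHeartbeats 1600000 in
open SAux in
theorem stmt18 (a b c : ℝ) (ha : 0 < a) (hc : 0 < c)
    (x y : ℝ) (hw : ¬(x = 0 ∧ y = 0)) :
    cIter 2 2
      ![![(1 : IterLaurent 2), epsV 2 0],
        ![realEmb 2 a + realEmb 2 b * epsV 2 1, realEmb 2 c * epsV 2 1]]
      ![realEmb 2 x, realEmb 2 y] = 0 := by
  simp only [cIter]
  rw [if_neg]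
  intro hpos
  set v : Fin 2 → Fin 2 → IterLaurent 2 :=
    ![![(1 : IterLaurent 2), epsV 2 0],
      ![realEmb 2 a + realEmb 2 b * epsV 2 1, realEmb 2 c * epsV 2 1]] with hv
  set M : Matrix (Fin 2) (Fin 2) (IterLaurent 2) := Matrix.of fun r j => v j r with hM
  have hdet : M.det = realEmb 2 c * epsV 2 1
      - (realEmb 2 a + realEmb 2 b * epsV 2 1) * epsV 2 0 := by
    rw [Matrix.det_fin_two]
    simp [hM, hv]
  have hra : realEmb 2 a = CC (CC (a : IterLaurent 0)) := rfl
  have hrb : realEmb 2 b = CC (CC (b : IterLaurent 0)) := rfl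
  have hrc : realEmb 2 c = CC (CC (c : IterLaurent 0)) := rfl
  have hrx : realEmb 2 x = CC (CC (x : IterLaurent 0)) := rfl
  have hry : realEmb 2 y = CC (CC (y : IterLaurent 0)) := rfl
  have he1 : epsV 2 0 = CC XV := rfl
  have he2 : epsV 2 1 = XV := rfl
  -- positivity of -det
  have hsd : IterPos 1 (CC (a : IterLaurent 0) * XV) := posX' ha
  have hdpos : IterPos 2 (-M.det) := by
    have hconv : -M.det = CC (CC (a : IterLaurent 0) * XV)
        + CC (CC (b : IterLaurent 0) * XV - CC (c : IterLaurent 0)) * XV := by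
      rw [hdet, hra, hrb, hrc, he1, he2]
      simp only [CC_mul, CC_add, CC_sub, CC_neg]
      ring
    rw [hconv]
    exact posA' hsd
  have hdne : M.det ≠ 0 := by
    intro h
    exact iterPos_ne_zero hdpos (by rw [h, neg_zero])
  set k := M⁻¹ *ᵥ ![realEmb 2 x, realEmb 2 y] with hk
  have hMW : M *ᵥ k = ![realEmb 2 x, realEmb 2 y] := by
    rw [hk, Matrix.mulVec_mulVec, Matrix.mul_nonsing_inv M (isUnit_iff_ne_zero.mpr hdne),
      Matrix.one_mulVec]
  have e0 : (1 : IterLaurent 2) * k 0 + (realEmb 2 a + realEmb 2 b * epsV 2 1) * k 1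
      = realEmb 2 x := by
    have h := congrFun hMW 0
    simpa [Matrix.mulVec, dotProduct, Fin.sum_univ_two, hM, hv] using h
  have e1 : epsV 2 0 * k 0 + realEmb 2 c * epsV 2 1 * k 1 = realEmb 2 y := by
    have h := congrFun hMW 1
    simpa [Matrix.mulVec, dotProduct, Fin.sum_univ_two, hM, hv] using h
  have hn1 : M.det * k 1 = realEmb 2 y - epsV 2 0 * realEmb 2 x := by
    rw [hdet]; linear_combination e1 - epsV 2 0 * e0
  have hn0 : M.det * k 0 = realEmb 2 c * epsV 2 1 * realEmb 2 x
      - (realEmb 2 a + realEmb 2 b * epsV 2 1) * realEmb 2 y := by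
    rw [hdet]
    linear_combination realEmb 2 c * epsV 2 1 * e0
      - (realEmb 2 a + realEmb 2 b * epsV 2 1) * e1
  have final : ∀ (i : Fin 2) (N : IterLaurent 2), IterPos 2 N → M.det * k i = N → False := by
    intro i N hN hval
    have h1 : IterPos 2 (-M.det * k i) := iterPos_mul hdpos (hpos i)
    rw [neg_mul, hval] at h1
    exact iterPos_not_neg hN h1
  rcases lt_trichotomy y 0 with hy | hy | hy
  · -- y < 0 : use k 0
    have hs0 : IterPos 1 (-(CC (a : IterLaurent 0) * CC (y : IterLaurent 0))) := by
      rw [← (CC_neg (n := 0) _).trans (congrArg Neg.neg (CC_mul (n := 0) (a : IterLaurent 0) (y : IterLaurent 0)))]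
      exact posC' (show (0:ℝ) < -(a * y) by nlinarith)
    refine final 0 (CC (-(CC (a : IterLaurent 0) * CC (y : IterLaurent 0)))
        + CC (CC (c : IterLaurent 0) * CC (x : IterLaurent 0)
            - CC (b : IterLaurent 0) * CC (y : IterLaurent 0)) * XV) (posA' hs0) ?_
    rw [hn0, hra, hrb, hrc, hrx, hry, he2]
    simp only [CC_mul, CC_add, CC_sub, CC_neg]
    ring
  · -- y = 0
    subst hy
    have hr0 : realEmb 2 0 = 0 := by
      rw [show realEmb 2 (0:ℝ) = CC (CC (0 : IterLaurent 0)) from rfl, CC_zero, CC_zero]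
    rcases lt_trichotomy x 0 with hx | hx | hx
    · -- x < 0 : use k 1
      have hs1 : IterPos 1 (-(CC (x : IterLaurent 0) * XV)) := by
        rw [show (-(CC (x : IterLaurent 0) * XV) : IterLaurent 1)
            = CC (-(x : IterLaurent 0)) * XV by
              rw [show CC (n := 0) (-(x : IterLaurent 0)) = -CC (n := 0) (x : IterLaurent 0) from CC_neg _]; ring]
        exact posX' (show (0:ℝ) < -x by linarith)
      refine final 1 (CC (-(CC (x : IterLaurent 0) * XV))) (posC' hs1) ?_
      rw [hn1, hr0, hrx, he1]
      simp only [CC_mul, CC_add, CC_sub, CC_neg]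
      ring
    · exact hw ⟨hx, rfl⟩
    · -- x > 0 : use k 0
      have ht1 : IterPos 1 (CC (c : IterLaurent 0) * CC (x : IterLaurent 0)) := by
        rw [← CC_mul (n := 0) (c : IterLaurent 0) (x : IterLaurent 0)]
        exact posC' (show (0:ℝ) < c * x from mul_pos hc hx)
      refine final 0 (CC (CC (c : IterLaurent 0) * CC (x : IterLaurent 0)) * XV)
        (posX' ht1) ?_
      rw [hn0, hr0, hra, hrb, hrc, hrx, he2]
      simp only [CC_mul, CC_add, CC_sub, CC_neg]
      ring
  · -- y > 0 : use k 1
    have hs1 : IterPos 1 (CC (y : IterLaurent 0) - CC (x : IterLaurent 0) * XV) := by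
      rw [show (CC (y : IterLaurent 0) - CC (x : IterLaurent 0) * XV : IterLaurent 1)
          = CC (y : IterLaurent 0) + CC (-(x : IterLaurent 0)) * XV by
            rw [show CC (n := 0) (-(x : IterLaurent 0)) = -CC (n := 0) (x : IterLaurent 0) from CC_neg _]; ring]
      exact posA' hy
    refine final 1 (CC (CC (y : IterLaurent 0) - CC (x : IterLaurent 0) * XV))
      (posC' hs1) ?_
    rw [hn1, hrx, hry, he1]
    simp only [CC_mul, CC_add, CC_sub, CC_neg]
    ring
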